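/- Let L ≥ 1 and let A_1,…,A_{L+1}, B_1,…,B_{L+1}, M_1,…,M_{L+1}, N_1,…,N_{L+1} be real matrices such that for each i, A_i and B_i have size d_{i−1} × d_i and M_i, N_i have size d_i × d_i (so the products below are defined). Assume: ‖A‖ ≥ √(L + 1/2), where ‖A‖ = (Σ_i ‖A_i‖_F²)^{1/2}; for all i, ‖M_i‖_op ≤ 1 and ‖N_i‖_op ≤ 1; and for all i, ‖M_i − N_i‖_op ≤ κ. Then, writing ‖A − B‖ = (Σ_i ‖A_i − B_i‖_F²)^{1/2}, one has ‖Π_{i=1}^{L+1}(A_i M_i) − Π_{i=1}^{L+1}(B_i N_i)‖_op ≤ (3/2)·(‖A‖ + ‖A − B‖)^{L+1}·(κ·‖A‖ + ‖A − B‖). -/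

import Mathlib

open scoped BigOperators
noncomputable section

/-- Operator (ℓ²→ℓ²) norm of a real matrix. -/
def opNorm {m k : ℕ} (A : Matrix (Fin m) (Fin k) ℝ) : ℝ :=
  ‖LinearMap.toContinuousLinearMap (Matrix.toEuclideanLin A)‖

/-- Frobenius norm of a matrix. -/
def frobNorm {m k : ℕ} (A : Matrix (Fin m) (Fin k) ℝ) : ℝ :=
  Real.sqrt (∑ i, ∑ j, A i j ^ 2)

/-- The product `A_1 M_1 A_2 M_2 ⋯ A_m M_m` (with paper index `i = 1, …, m`
corresponding to 0-based index `i - 1`), for matrices of compatible sizes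
`A_i : d_{i-1} × d_i`, `M_i : d_i × d_i`. -/
def chainProd (d : ℕ → ℕ) (A : (i : ℕ) → Matrix (Fin (d i)) (Fin (d (i + 1))) ℝ)
    (M : (i : ℕ) → Matrix (Fin (d (i + 1))) (Fin (d (i + 1))) ℝ) :
    (m : ℕ) → Matrix (Fin (d 0)) (Fin (d m)) ℝ
  | 0 => 1
  | m + 1 => chainProd d A M m * A m * M m

section l2
open scoped Matrix.Norms.L2Operator

lemma opNorm_eq_norm {m k : ℕ} (A : Matrix (Fin m) (Fin k) ℝ) : opNorm A = ‖A‖ := rfl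

lemma opNorm_nonneg {m k : ℕ} (A : Matrix (Fin m) (Fin k) ℝ) : 0 ≤ opNorm A := by
  rw [opNorm_eq_norm]; exact norm_nonneg _

lemma opNorm_mul_le {a b c : ℕ} (A : Matrix (Fin a) (Fin b) ℝ) (B : Matrix (Fin b) (Fin c) ℝ) :
    opNorm (A * B) ≤ opNorm A * opNorm B := by
  simp only [opNorm_eq_norm]; exact Matrix.l2_opNorm_mul A B

lemma opNorm_add_le {a b : ℕ} (A B : Matrix (Fin a) (Fin b) ℝ) :
    opNorm (A + B) ≤ opNorm A + opNorm B := by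
  simp only [opNorm_eq_norm]; exact norm_add_le A B

end l2

section frob
attribute [local instance] Matrix.frobeniusNormedAddCommGroup

lemma frobNorm_eq_norm {m k : ℕ} (A : Matrix (Fin m) (Fin k) ℝ) : frobNorm A = ‖A‖ := by
  rw [Matrix.frobenius_norm_def, frobNorm, Real.sqrt_eq_rpow]
  congr 1
  refine Finset.sum_congr rfl fun i _ => Finset.sum_congr rfl fun j _ => ?_
  rw [Real.rpow_two, Real.norm_eq_abs, sq_abs]

lemma frobNorm_nonneg {m k : ℕ} (A : Matrix (Fin m) (Fin k) ℝ) : 0 ≤ frobNorm A :=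
  Real.sqrt_nonneg _

lemma frobNorm_le_add {m k : ℕ} (A B : Matrix (Fin m) (Fin k) ℝ) :
    frobNorm B ≤ frobNorm A + frobNorm (A - B) := by
  simp only [frobNorm_eq_norm]
  calc ‖B‖ = ‖A - (A - B)‖ := by congr 1; abel
    _ ≤ ‖A‖ + ‖A - B‖ := norm_sub_le _ _
end frob

lemma opNorm_le_frobNorm {m k : ℕ} (A : Matrix (Fin m) (Fin k) ℝ) : opNorm A ≤ frobNorm A := by
  rw [opNorm]
  refine ContinuousLinearMap.opNorm_le_bound _ (frobNorm_nonneg A) fun x => ?_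
  have hx : 0 ≤ ‖x‖ := norm_nonneg x
  rw [LinearMap.coe_toContinuousLinearMap']
  rw [EuclideanSpace.norm_eq, frobNorm, ← Real.sqrt_sq hx,
    ← Real.sqrt_mul (by positivity) (‖x‖ ^ 2)]
  apply Real.sqrt_le_sqrt
  rw [Finset.sum_mul]
  refine Finset.sum_le_sum fun i _ => ?_
  have h1 : (Matrix.toEuclideanLin A x) i = ∑ j, A i j * x j := by
    simp [Matrix.toEuclideanLin_apply, Matrix.mulVec, dotProduct]
  rw [Real.norm_eq_abs, sq_abs, h1]
  have h2 : ‖x‖ ^ 2 = ∑ j, x j ^ 2 := by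
    rw [EuclideanSpace.norm_eq, Real.sq_sqrt (by positivity)]
    refine Finset.sum_congr rfl fun j _ => by rw [Real.norm_eq_abs, sq_abs]
  rw [h2]
  exact Finset.sum_mul_sq_le_sq_mul_sq _ _ _

lemma opNorm_one_le {m : ℕ} : opNorm (1 : Matrix (Fin m) (Fin m) ℝ) ≤ 1 := by
  rw [opNorm]
  refine ContinuousLinearMap.opNorm_le_bound _ zero_le_one fun x => ?_
  rw [LinearMap.coe_toContinuousLinearMap', one_mul]
  have : Matrix.toEuclideanLin (1 : Matrix (Fin m) (Fin m) ℝ) x = x := by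
    apply (WithLp.equiv 2 _).injective
    simp [Matrix.piLp_ofLp_toEuclideanLin, Matrix.one_mulVec]
  rw [this]

lemma opNorm_mul3_le {a b c e : ℕ} (X : Matrix (Fin a) (Fin b) ℝ) (Y : Matrix (Fin b) (Fin c) ℝ)
    (Z : Matrix (Fin c) (Fin e) ℝ) (x y : ℝ) (hx : opNorm X ≤ x) (hy : opNorm Y ≤ y)
    (hz : opNorm Z ≤ 1) (hx0 : 0 ≤ x) (hy0 : 0 ≤ y) :
    opNorm (X * Y * Z) ≤ x * y :=
  calc opNorm (X * Y * Z) ≤ opNorm (X * Y) * opNorm Z := opNorm_mul_le _ _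
    _ ≤ opNorm (X * Y) * 1 := mul_le_mul_of_nonneg_left hz (opNorm_nonneg _)
    _ = opNorm (X * Y) := mul_one _
    _ ≤ opNorm X * opNorm Y := opNorm_mul_le _ _
    _ ≤ x * y := mul_le_mul hx hy (opNorm_nonneg _) hx0

lemma chainProd_opNorm_le (d : ℕ → ℕ) (A : (i : ℕ) → Matrix (Fin (d i)) (Fin (d (i + 1))) ℝ)
    (M : (i : ℕ) → Matrix (Fin (d (i + 1))) (Fin (d (i + 1))) ℝ) (c : ℝ) (hc : 1 ≤ c)
    (m : ℕ) (h : ∀ i < m, opNorm (A i) ≤ c ∧ opNorm (M i) ≤ 1) :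
    opNorm (chainProd d A M m) ≤ c ^ m := by
  have hc0 : (0:ℝ) ≤ c := le_trans zero_le_one hc
  induction m with
  | zero => simpa [chainProd] using opNorm_one_le
  | succ n ih =>
    have hn := ih (fun i hi => h i (Nat.lt_succ_of_lt hi))
    calc opNorm (chainProd d A M (n+1)) = opNorm (chainProd d A M n * A n * M n) := rfl
      _ ≤ c ^ n * c := opNorm_mul3_le _ _ _ _ _ hn (h n (Nat.lt_succ_self n)).1
          (h n (Nat.lt_succ_self n)).2 (by positivity) hc0
      _ = c ^ (n+1) := (pow_succ c n).symm

set_option maxHeartbeats 1000000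

/-- Lemma `l:ABCD`: perturbation bound for a product of matrices
interleaved with operator-norm-contractive factors. -/
theorem statement13 (L : ℕ) (hL : 1 ≤ L) (d : ℕ → ℕ)
    (A B : (i : ℕ) → Matrix (Fin (d i)) (Fin (d (i + 1))) ℝ)
    (M N : (i : ℕ) → Matrix (Fin (d (i + 1))) (Fin (d (i + 1))) ℝ)
    (κ : ℝ)
    (hA : Real.sqrt ((L : ℝ) + 1 / 2) ≤
      Real.sqrt (∑ i ∈ Finset.range (L + 1), frobNorm (A i) ^ 2))
    (hM : ∀ i < L + 1, opNorm (M i) ≤ 1)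
    (hN : ∀ i < L + 1, opNorm (N i) ≤ 1)
    (hMN : ∀ i < L + 1, opNorm (M i - N i) ≤ κ) :
    opNorm (chainProd d A M (L + 1) - chainProd d B N (L + 1)) ≤
      3 / 2 *
        (Real.sqrt (∑ i ∈ Finset.range (L + 1), frobNorm (A i) ^ 2) +
            Real.sqrt (∑ i ∈ Finset.range (L + 1), frobNorm (A i - B i) ^ 2)) ^ (L + 1) *
        (κ * Real.sqrt (∑ i ∈ Finset.range (L + 1), frobNorm (A i) ^ 2) +
          Real.sqrt (∑ i ∈ Finset.range (L + 1), frobNorm (A i - B i) ^ 2)) := by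
  set α := Real.sqrt (∑ i ∈ Finset.range (L + 1), frobNorm (A i) ^ 2) with hαdef
  set δ := Real.sqrt (∑ i ∈ Finset.range (L + 1), frobNorm (A i - B i) ^ 2) with hδdef
  have hδ0 : 0 ≤ δ := Real.sqrt_nonneg _
  have hκ0 : 0 ≤ κ := le_trans (opNorm_nonneg _) (hMN 0 (Nat.succ_pos L))
  have hα1 : (1:ℝ) ≤ α := by
    have h1 : Real.sqrt 1 ≤ Real.sqrt ((L:ℝ) + 1/2) := by
      apply Real.sqrt_le_sqrt
      have : (1:ℝ) ≤ (L:ℝ) := by exact_mod_cast hL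
      linarith
    have := le_trans h1 hA
    simpa using this
  have hα0 : (0:ℝ) ≤ α := le_trans zero_le_one hα1
  have hfa : ∀ i < L + 1, frobNorm (A i) ≤ α := by
    intro i hi
    rw [hαdef, ← Real.sqrt_sq (frobNorm_nonneg (A i))]
    apply Real.sqrt_le_sqrt
    exact Finset.single_le_sum (f := fun j => frobNorm (A j) ^ 2)
      (fun j _ => sq_nonneg _) (Finset.mem_range.mpr hi)
  have hfd : ∀ i < L + 1, frobNorm (A i - B i) ≤ δ := by
    intro i hi
    rw [hδdef, ← Real.sqrt_sq (frobNorm_nonneg (A i - B i))]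
    apply Real.sqrt_le_sqrt
    exact Finset.single_le_sum (f := fun j => frobNorm (A j - B j) ^ 2)
      (fun j _ => sq_nonneg _) (Finset.mem_range.mpr hi)
  have hB : ∀ i < L + 1, opNorm (B i) ≤ α + δ := fun i hi =>
    le_trans (opNorm_le_frobNorm _) <| le_trans (frobNorm_le_add (A i) (B i))
      (add_le_add (hfa i hi) (hfd i hi))
  have hαδ1 : (1:ℝ) ≤ α + δ := by linarith
  have step : ∀ i < L + 1, opNorm (A i * M i - B i * N i) ≤
      frobNorm (A i - B i) + κ * frobNorm (A i) := by
    intro i hi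
    have hdec : A i * M i - B i * N i = (A i - B i) * N i + A i * (M i - N i) := by
      simp [Matrix.sub_mul, Matrix.mul_sub]
    rw [hdec]
    calc opNorm ((A i - B i) * N i + A i * (M i - N i))
        ≤ opNorm ((A i - B i) * N i) + opNorm (A i * (M i - N i)) := opNorm_add_le _ _
      _ ≤ opNorm (A i - B i) * opNorm (N i) + opNorm (A i) * opNorm (M i - N i) :=
          add_le_add (opNorm_mul_le _ _) (opNorm_mul_le _ _)
      _ ≤ frobNorm (A i - B i) * 1 + frobNorm (A i) * κ :=
          add_le_add
            (mul_le_mul (opNorm_le_frobNorm _) (hN i hi) (opNorm_nonneg _) (frobNorm_nonneg _))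
            (mul_le_mul (opNorm_le_frobNorm _) (hMN i hi) (opNorm_nonneg _) (frobNorm_nonneg _))
      _ = frobNorm (A i - B i) + κ * frobNorm (A i) := by ring
  have key : ∀ m, m + 1 ≤ L + 1 →
      opNorm (chainProd d A M (m+1) - chainProd d B N (m+1)) ≤
        (α + δ) ^ m * ∑ i ∈ Finset.range (m+1), (frobNorm (A i - B i) + κ * frobNorm (A i)) := by
    intro m
    induction m with
    | zero =>
      intro _
      have h1 : chainProd d A M 1 = A 0 * M 0 := by
        show (1 : Matrix (Fin (d 0)) (Fin (d 0)) ℝ) * A 0 * M 0 = A 0 * M 0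
        rw [Matrix.one_mul]
      have h2 : chainProd d B N 1 = B 0 * N 0 := by
        show (1 : Matrix (Fin (d 0)) (Fin (d 0)) ℝ) * B 0 * N 0 = B 0 * N 0
        rw [Matrix.one_mul]
      rw [h1, h2]
      simpa using step 0 (Nat.succ_pos L)
    | succ n ih =>
      intro hm
      have hm' : n + 1 ≤ L + 1 := le_trans (Nat.le_succ _) hm
      have hn1 : n + 1 < L + 1 := hm
      have ihn := ih hm'
      set P := chainProd d A M (n+1) with hP
      set Q := chainProd d B N (n+1) with hQdef
      set S := ∑ i ∈ Finset.range (n+1), (frobNorm (A i - B i) + κ * frobNorm (A i)) with hS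
      have hS0 : 0 ≤ S := Finset.sum_nonneg fun i _ =>
        add_nonneg (frobNorm_nonneg _) (mul_nonneg hκ0 (frobNorm_nonneg _))
      have ht0 : 0 ≤ frobNorm (A (n+1) - B (n+1)) + κ * frobNorm (A (n+1)) :=
        add_nonneg (frobNorm_nonneg _) (mul_nonneg hκ0 (frobNorm_nonneg _))
      have hdec : chainProd d A M (n+2) - chainProd d B N (n+2) =
          (P - Q) * A (n+1) * M (n+1) + Q * (A (n+1) * M (n+1) - B (n+1) * N (n+1)) := by
        show P * A (n+1) * M (n+1) - Q * B (n+1) * N (n+1) = _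
        rw [Matrix.sub_mul, Matrix.sub_mul, Matrix.mul_sub,
          Matrix.mul_assoc Q (A (n+1)) (M (n+1)), Matrix.mul_assoc Q (B (n+1)) (N (n+1))]
        abel
      have hQ : opNorm Q ≤ (α + δ) ^ (n+1) :=
        chainProd_opNorm_le d B N (α + δ) hαδ1 (n+1)
          (fun i hi => ⟨hB i (lt_of_lt_of_le hi hm'), hN i (lt_of_lt_of_le hi hm')⟩)
      have hAn : opNorm (A (n+1)) ≤ α :=
        le_trans (opNorm_le_frobNorm _) (hfa (n+1) hn1)
      have hαδ0 : (0:ℝ) ≤ α + δ := le_trans zero_le_one hαδ1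
      have hpn : (0:ℝ) ≤ (α + δ) ^ n := pow_nonneg hαδ0 n
      have hpn1 : (0:ℝ) ≤ (α + δ) ^ (n+1) := pow_nonneg hαδ0 (n+1)
      have t1 : opNorm ((P - Q) * A (n+1) * M (n+1)) ≤ ((α + δ) ^ n * S) * α :=
        opNorm_mul3_le _ _ _ _ _ ihn hAn (hM (n+1) hn1) (mul_nonneg hpn hS0) hα0
      have t2 : opNorm (Q * (A (n+1) * M (n+1) - B (n+1) * N (n+1))) ≤
          (α + δ) ^ (n+1) * (frobNorm (A (n+1) - B (n+1)) + κ * frobNorm (A (n+1))) :=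
        le_trans (opNorm_mul_le _ _)
          (mul_le_mul hQ (step (n+1) hn1) (opNorm_nonneg _) hpn1)
      have e1 : ((α + δ) ^ n * S) * α ≤ (α + δ) ^ (n+1) * S := by
        have h : (α + δ) ^ n * α ≤ (α + δ) ^ (n+1) := by
          rw [pow_succ]
          exact mul_le_mul_of_nonneg_left (by linarith) hpn
        calc ((α + δ) ^ n * S) * α = ((α + δ) ^ n * α) * S := by ring
          _ ≤ (α + δ) ^ (n+1) * S := mul_le_mul_of_nonneg_right h hS0
      have hadd := opNorm_add_le ((P - Q) * A (n+1) * M (n+1))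
        (Q * (A (n+1) * M (n+1) - B (n+1) * N (n+1)))
      rw [hdec, Finset.sum_range_succ]
      have hdist : (α + δ) ^ (n+1) *
          (S + (frobNorm (A (n+1) - B (n+1)) + κ * frobNorm (A (n+1)))) =
          (α + δ) ^ (n+1) * S +
          (α + δ) ^ (n+1) * (frobNorm (A (n+1) - B (n+1)) + κ * frobNorm (A (n+1))) := by ring
      linarith
  have hCS : ∀ (f : ℕ → ℝ), (∀ i, 0 ≤ f i) →
      (∑ i ∈ Finset.range (L+1), f i) ≤
        Real.sqrt (L+1) * Real.sqrt (∑ i ∈ Finset.range (L+1), f i ^ 2) := by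
    intro f hf
    have h1 : (∑ i ∈ Finset.range (L+1), f i) ^ 2 ≤
        (L+1 : ℝ) * ∑ i ∈ Finset.range (L+1), f i ^ 2 := by
      have := sq_sum_le_card_mul_sum_sq (s := Finset.range (L+1)) (f := f)
      simpa using this
    have h2 : 0 ≤ ∑ i ∈ Finset.range (L+1), f i := Finset.sum_nonneg fun i _ => hf i
    calc (∑ i ∈ Finset.range (L+1), f i)
        = Real.sqrt ((∑ i ∈ Finset.range (L+1), f i) ^ 2) := (Real.sqrt_sq h2).symm
      _ ≤ Real.sqrt ((L+1 : ℝ) * ∑ i ∈ Finset.range (L+1), f i ^ 2) := Real.sqrt_le_sqrt h1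
      _ = Real.sqrt (L+1) * Real.sqrt (∑ i ∈ Finset.range (L+1), f i ^ 2) :=
          Real.sqrt_mul (by positivity) _
  have hSd : (∑ i ∈ Finset.range (L+1), frobNorm (A i - B i)) ≤ Real.sqrt (L+1) * δ :=
    hCS (fun i => frobNorm (A i - B i)) (fun i => frobNorm_nonneg _)
  have hSa : (∑ i ∈ Finset.range (L+1), frobNorm (A i)) ≤ Real.sqrt (L+1) * α :=
    hCS (fun i => frobNorm (A i)) (fun i => frobNorm_nonneg _)
  have hsq : Real.sqrt ((L:ℝ)+1) ≤ 3/2 * α := by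
    have h1 : Real.sqrt ((L:ℝ)+1) ≤ Real.sqrt ((9/4) * ((L:ℝ) + 1/2)) := by
      apply Real.sqrt_le_sqrt; linarith [Nat.cast_nonneg (α := ℝ) L]
    have h2 : Real.sqrt ((9/4 : ℝ) * ((L:ℝ) + 1/2)) = 3/2 * Real.sqrt ((L:ℝ) + 1/2) := by
      rw [Real.sqrt_mul (by norm_num), show (9/4:ℝ) = (3/2)^2 by norm_num,
        Real.sqrt_sq (by norm_num)]
    calc Real.sqrt ((L:ℝ)+1) ≤ 3/2 * Real.sqrt ((L:ℝ) + 1/2) := by rw [← h2]; exact h1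
      _ ≤ 3/2 * α := by linarith
  have hmain := key L le_rfl
  have hsum : (∑ i ∈ Finset.range (L+1), (frobNorm (A i - B i) + κ * frobNorm (A i))) ≤
      Real.sqrt ((L:ℝ)+1) * (δ + κ * α) := by
    rw [Finset.sum_add_distrib, ← Finset.mul_sum]
    have h := mul_le_mul_of_nonneg_left hSa hκ0
    nlinarith [Real.sqrt_nonneg ((L:ℝ)+1)]
  have hpow0 : (0:ℝ) ≤ (α + δ) ^ L := pow_nonneg (by linarith) L
  calc opNorm (chainProd d A M (L + 1) - chainProd d B N (L + 1))
      ≤ (α + δ) ^ L * ∑ i ∈ Finset.range (L+1), (frobNorm (A i - B i) + κ * frobNorm (A i)) :=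
        hmain
    _ ≤ (α + δ) ^ L * (Real.sqrt ((L:ℝ)+1) * (δ + κ * α)) :=
        mul_le_mul_of_nonneg_left hsum hpow0
    _ ≤ (α + δ) ^ L * ((3/2 * (α + δ)) * (κ * α + δ)) := by
        refine mul_le_mul_of_nonneg_left ?_ hpow0
        have h1 : δ + κ * α = κ * α + δ := by ring
        rw [h1]
        have h2 : 0 ≤ κ * α + δ := add_nonneg (mul_nonneg hκ0 hα0) hδ0
        have h3 : Real.sqrt ((L:ℝ)+1) ≤ 3/2 * (α + δ) := by linarith
        exact mul_le_mul_of_nonneg_right h3 h2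
    _ = 3 / 2 * (α + δ) ^ (L + 1) * (κ * α + δ) := by ring
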